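/- For all integers m ≥ 1 and 1 ≤ k ≤ m, the inequality (1/(2k)) · ((2m)(2m−4)(2m−6)···(2m−2k)) / ((2m−1)(2m−3)···(2m−2k+1)) ≥ (1/(2k))·(m−k)/m holds, and summing over k from 1 to m gives ∑_{k=1}^{m} (1/(2k))·(m−k)/m ≥ (1/2)(H_m − 1). -/

import Mathlib

open Finset

lemma den_pos (m k : ℕ) (hk : k ≤ m) :
    0 < ∏ i ∈ Icc 1 k, ((2 * m : ℝ) - 2 * i + 1) := by
  apply Finset.prod_pos
  intro i hi
  simp only [Finset.mem_Icc] at hi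
  have : (i : ℝ) ≤ m := by exact_mod_cast le_trans hi.2 hk
  linarith

lemma aux (m : ℕ) (hm : 1 ≤ m) : ∀ k, 1 ≤ k → k ≤ m →
    (((2 * m : ℝ) * ∏ i ∈ Icc 2 k, ((2 * m : ℝ) - 2 * i)) /
      (∏ i ∈ Icc 1 k, ((2 * m : ℝ) - 2 * i + 1))) ≥ ((m : ℝ) - k) / m := by
  have hM : (1:ℝ) ≤ m := by exact_mod_cast hm
  intro k hk1
  induction k, hk1 using Nat.le_induction with
  | base =>
    intro _
    simp only [Finset.Icc_self, Finset.prod_singleton]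
    rw [show Finset.Icc 2 1 = ∅ by decide, Finset.prod_empty]
    push_cast
    rw [ge_iff_le, div_le_div_iff₀ (by linarith) (by linarith)]
    nlinarith
  | succ k hk ih =>
    intro hkm
    have hkm' : k ≤ m := le_of_lt hkm
    have hkR : ((k:ℝ)+1) ≤ m := by exact_mod_cast hkm
    have hD := den_pos m k hkm'
    rw [Finset.prod_Icc_succ_top (by omega), Finset.prod_Icc_succ_top (by omega)]
    push_cast
    set P := ∏ i ∈ Icc 2 k, ((2 * m : ℝ) - 2 * i)
    set D := ∏ i ∈ Icc 1 k, ((2 * m : ℝ) - 2 * i + 1)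
    have hx : (0:ℝ) ≤ 2*m - 2*((k:ℝ)+1) := by linarith
    have hy : (0:ℝ) < 2*m - 2*((k:ℝ)+1) + 1 := by linarith
    have key : (2*(m:ℝ) * (P * (2*m - 2*((k:ℝ)+1)))) / (D * (2*m - 2*((k:ℝ)+1)+1))
        = ((2*(m:ℝ)*P)/D) * ((2*m - 2*((k:ℝ)+1))/(2*m - 2*((k:ℝ)+1)+1)) := by
      field_simp
    rw [key]
    have hr := ih hkm'
    have h0 : (0:ℝ) ≤ ((m:ℝ)-k)/m := div_nonneg (by linarith) (by linarith)
    have step1 : ((2*(m:ℝ)*P)/D) * ((2*m - 2*((k:ℝ)+1))/(2*m - 2*((k:ℝ)+1)+1))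
        ≥ (((m:ℝ)-k)/m) * ((2*m - 2*((k:ℝ)+1))/(2*m - 2*((k:ℝ)+1)+1)) := by
      apply mul_le_mul_of_nonneg_right hr (by positivity)
    refine le_trans ?_ step1
    rw [div_mul_div_comm, div_le_div_iff₀ (by linarith) (by positivity)]
    nlinarith [sq_nonneg ((m:ℝ) - k - 1)]

theorem lower_bound_ratio (m : ℕ) (hm : 1 ≤ m) :
    (∀ k, 1 ≤ k → k ≤ m →
      (1 / (2 * (k : ℝ))) *
          (((2 * m : ℝ) * ∏ i ∈ Icc 2 k, ((2 * m : ℝ) - 2 * i)) /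
            (∏ i ∈ Icc 1 k, ((2 * m : ℝ) - 2 * i + 1))) ≥
        (1 / (2 * (k : ℝ))) * (((m : ℝ) - k) / m)) ∧
    (∑ k ∈ Icc 1 m, (1 / (2 * (k : ℝ))) * (((m : ℝ) - k) / m) ≥
      (1/2) * ((harmonic m : ℝ) - 1)) := by
  constructor
  · intro k hk1 hkm
    have := aux m hm k hk1 hkm
    have hkpos : (0:ℝ) < k := by exact_mod_cast hk1
    apply mul_le_mul_of_nonneg_left this (by positivity)
  · have hM : (0:ℝ) < m := by exact_mod_cast hm
    have hharm : (harmonic m : ℝ) = ∑ k ∈ Icc 1 m, (1:ℝ)/k := by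
      rw [harmonic]
      push_cast
      rw [← Finset.Ico_add_one_right_eq_Icc, Finset.sum_Ico_eq_sum_range]
      simp [add_comm]
    have hsum : ∑ k ∈ Icc 1 m, (1 / (2 * (k : ℝ))) * (((m : ℝ) - k) / m)
        = ∑ k ∈ Icc 1 m, ((1/2) * ((1:ℝ)/k) - 1/(2*m)) := by
      apply Finset.sum_congr rfl
      intro k hk
      simp only [Finset.mem_Icc] at hk
      have hkpos : (0:ℝ) < k := by exact_mod_cast hk.1
      field_simp
    rw [hsum, Finset.sum_sub_distrib, Finset.sum_const, hharm, mul_sub,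
      ← Finset.mul_sum]
    have hcard : (Finset.Icc 1 m).card = m := by simp
    rw [hcard, nsmul_eq_mul]
    have : (m:ℝ) * ((1:ℝ)/(2*m)) = 1/2 := by field_simp
    linarith
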